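/- The function p*(μ) is constant and equal to s_1 on I_1 = (0, μ_1], and is strictly decreasing on (μ_1, 1); consequently, for each k with 1 < k ≤ m, the image J_k := p*(I_k) satisfies J_k = [p_k, p_{k−1}) for k < m and J_m = (p_m, p_{m−1}), where p_k := p*(μ_k), and the intervals J_k for 1 < k ≤ m partition (π, s_1), with p_m = π and p_1 = s_1. -/

import Mathlib

open Finset

/-!
Single-group setting.  A finite probability space `(Ω, P)`, a binary target `Y` with
base rate `π := P(Y = 1)`, and a calibrated score `S` taking `m > 1` distinct values
`1 ≥ s_1 > ⋯ > s_m ≥ 0` (here 0-indexed: `s i` is the paper's `s_{i+1}`), each with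
positive probability `w i = P(S = s i)`, are—via calibration
`P(Y = 1 ∣ S = s i) = s i`—completely described, for the purposes of classifiers
based on `S`, by the data below.  A (possibly randomized) binary classifier `R`
based on `S` (i.e. `P(R = 1 ∣ S, Y) = P(R = 1 ∣ S)`) is in turn determined by its
selection rule `t i = P(R = 1 ∣ S = s i)`, with `P(R = 1) = ∑ i, w i * t i`,
`P(Y = 1, R = 1) = ∑ i, s i * w i * t i`, `PPV(R) = P(Y = 1 ∣ R = 1)` and
`FOR(R) = P(Y = 1 ∣ R = 0)` as given below.
-/
structure CalibScore where
  m : ℕ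
  s : ℕ → ℝ
  w : ℕ → ℝ
  one_lt_m : 1 < m
  s_nonneg : ∀ i, i < m → 0 ≤ s i
  s_le_one : ∀ i, i < m → s i ≤ 1
  s_desc : ∀ i j, i < j → j < m → s j < s i
  w_pos : ∀ i, i < m → 0 < w i
  w_sum : ∑ i ∈ Finset.range m, w i = 1

namespace CalibScore

/-- Base rate `π = P(Y = 1) = E[S]` (by calibration). -/
noncomputable def pi (D : CalibScore) : ℝ := ∑ i ∈ Finset.range D.m, D.s i * D.w i

/-- `t` is a selection rule (`t i = P(R = 1 ∣ S = s i)` for a classifier `R` based on `S`). -/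
def IsSelRule (D : CalibScore) (t : ℕ → ℝ) : Prop := ∀ i, i < D.m → 0 ≤ t i ∧ t i ≤ 1

/-- Selection rate `μ = P(R = 1)`. -/
noncomputable def selRate (D : CalibScore) (t : ℕ → ℝ) : ℝ :=
  ∑ i ∈ Finset.range D.m, D.w i * t i

/-- `P(Y = 1, R = 1) = ∑ i, s i * P(S = s i) * P(R = 1 ∣ S = s i)` (by calibration). -/
noncomputable def posSel (D : CalibScore) (t : ℕ → ℝ) : ℝ :=
  ∑ i ∈ Finset.range D.m, D.s i * D.w i * t i

/-- `PPV(R) = P(Y = 1 ∣ R = 1)`. -/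
noncomputable def ppv (D : CalibScore) (t : ℕ → ℝ) : ℝ := D.posSel t / D.selRate t

/-- `FOR(R) = P(Y = 1 ∣ R = 0)`. -/
noncomputable def forr (D : CalibScore) (t : ℕ → ℝ) : ℝ :=
  (D.pi - D.posSel t) / (1 - D.selRate t)

/-- `(p, q)` is feasible with selection rate `μ`: attained by a nonconstant
classifier based on `S` with `P(R = 1) = μ`. -/
def FeasibleWith (D : CalibScore) (μ p q : ℝ) : Prop :=
  0 < μ ∧ μ < 1 ∧ ∃ t, D.IsSelRule t ∧ D.selRate t = μ ∧ D.ppv t = p ∧ D.forr t = q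

/-- The feasible region `C`. -/
def Feasible (D : CalibScore) (p q : ℝ) : Prop := ∃ μ, D.FeasibleWith μ p q

/-- `μ_k = ∑_{i ≤ k} P(S = s_i)` (1-based `k`; `μ_0 = 0`). -/
noncomputable def muk (D : CalibScore) (k : ℕ) : ℝ := ∑ i ∈ Finset.range k, D.w i

/-- `c_k = ∑_{i < k} P(S = s_i) (s_i − s_k)` (1-based `k`). -/
noncomputable def ck (D : CalibScore) (k : ℕ) : ℝ :=
  ∑ i ∈ Finset.range (k - 1), D.w i * (D.s i - D.s (k - 1))

/-- `I_k = (μ_{k−1}, μ_k] ∩ (0, 1)` (1-based `k`). -/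
def Ik (D : CalibScore) (k : ℕ) : Set ℝ :=
  Set.Ioc (D.muk (k - 1)) (D.muk k) ∩ Set.Ioo 0 1

/-- `p*(μ)`: the supremum of `p` over pairs `(p, q)` feasible with `μ` having `q ≤ π ≤ p`. -/
noncomputable def pStar (D : CalibScore) (μ : ℝ) : ℝ :=
  sSup {p | ∃ q, D.FeasibleWith μ p q ∧ q ≤ D.pi ∧ D.pi ≤ p}

/-- `q*(μ)`: the infimum of `q` over pairs `(p, q)` feasible with `μ` having `q ≤ π ≤ p`. -/
noncomputable def qStar (D : CalibScore) (μ : ℝ) : ℝ :=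
  sInf {q | ∃ p, D.FeasibleWith μ p q ∧ q ≤ D.pi ∧ D.pi ≤ p}

/-- `p_k = s_k + c_k / μ_k` (1-based `k`), the breakpoint values of the boundary. -/
noncomputable def pkF (D : CalibScore) (k : ℕ) : ℝ := D.s (k - 1) + D.ck k / D.muk k

/-- The boundary formula `q(p) = ((π − c_k) p − s_k π) / (p − s_k − c_k)` on `J_k`
(1-based `k`). -/
noncomputable def qF (D : CalibScore) (k : ℕ) (p : ℝ) : ℝ :=
  ((D.pi - D.ck k) * p - D.s (k - 1) * D.pi) / (p - D.s (k - 1) - D.ck k)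

end CalibScore


namespace CalibScore

variable (D : CalibScore)

lemma muk_zero : D.muk 0 = 0 := by simp [muk]

lemma muk_m : D.muk D.m = 1 := D.w_sum

lemma muk_le {k l : ℕ} (hkl : k ≤ l) (hl : l ≤ D.m) : D.muk k ≤ D.muk l := by
  unfold muk
  apply Finset.sum_le_sum_of_subset_of_nonneg (by simpa using hkl)
  intro i hi _
  exact (D.w_pos i (lt_of_lt_of_le (Finset.mem_range.mp hi) hl)).le

lemma muk_lt {k l : ℕ} (hkl : k < l) (hl : l ≤ D.m) : D.muk k < D.muk l := by
  have h1 : D.muk (k+1) ≤ D.muk l := D.muk_le hkl hl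
  have h2 : D.muk k < D.muk (k+1) := by
    unfold muk
    rw [Finset.sum_range_succ]
    have := D.w_pos k (lt_of_lt_of_le hkl hl)
    linarith
  linarith

lemma muk_nonneg {k : ℕ} (hk : k ≤ D.m) : 0 ≤ D.muk k := by
  simpa [D.muk_zero] using D.muk_le (Nat.zero_le k) hk

lemma muk_le_one {k : ℕ} (hk : k ≤ D.m) : D.muk k ≤ 1 := by
  simpa [D.muk_m] using D.muk_le hk le_rfl

lemma muk_pos {k : ℕ} (hk : 1 ≤ k) (hk' : k ≤ D.m) : 0 < D.muk k := by
  simpa [D.muk_zero] using D.muk_lt hk hk'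

lemma muk_lt_one {k : ℕ} (hk : k < D.m) : D.muk k < 1 := by
  simpa [D.muk_m] using D.muk_lt hk le_rfl

lemma ck_succ (k : ℕ) :
    D.ck (k+1) = (∑ i ∈ Finset.range k, D.s i * D.w i) - D.s k * D.muk k := by
  unfold ck muk
  simp only [Nat.add_sub_cancel]
  rw [Finset.mul_sum, ← Finset.sum_sub_distrib]
  apply Finset.sum_congr rfl
  intro i _
  ring

lemma key (k : ℕ) :
    D.s k * D.muk (k+1) + D.ck (k+1) = ∑ i ∈ Finset.range (k+1), D.s i * D.w i := by
  rw [D.ck_succ, Finset.sum_range_succ]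
  have : D.muk (k+1) = D.muk k + D.w k := by
    unfold muk; rw [Finset.sum_range_succ]
  rw [this]; ring

lemma ck_nonneg {k : ℕ} (hk : k ≤ D.m) : 0 ≤ D.ck k := by
  unfold ck
  apply Finset.sum_nonneg
  intro i hi
  have hi' := Finset.mem_range.mp hi
  have hm := D.one_lt_m
  have hkm : k - 1 < D.m := by omega
  have him : i < D.m := lt_trans hi' hkm
  have hs : D.s (k-1) ≤ D.s i := (D.s_desc i (k-1) hi' hkm).le
  have hw : 0 < D.w i := D.w_pos i him
  nlinarith

lemma ck_pos {k : ℕ} (hk : 2 ≤ k) (hk' : k ≤ D.m) : 0 < D.ck k := by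
  unfold ck
  apply Finset.sum_pos
  · intro i hi
    have hi' := Finset.mem_range.mp hi
    have hkm : k - 1 < D.m := by omega
    have him : i < D.m := lt_trans hi' hkm
    have hs : D.s (k-1) < D.s i := D.s_desc i (k-1) hi' hkm
    have hw : 0 < D.w i := D.w_pos i him
    nlinarith
  · exact Finset.nonempty_range_iff.mpr (by omega)

lemma pi_eq (D : CalibScore) : D.pi = D.s (D.m - 1) * 1 + D.ck D.m := by
  have hm := D.one_lt_m
  obtain ⟨j, hj⟩ : ∃ j, D.m = j + 1 := ⟨D.m - 1, by omega⟩
  have hkey := D.key j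
  rw [← hj, D.muk_m] at hkey
  have hj' : D.m - 1 = j := by omega
  unfold pi
  rw [hj']
  linarith

/-- Chebyshev-type inequality: the top-`k` average dominates the global average. -/
lemma g_nonneg (D : CalibScore) {k : ℕ} (hk : 1 ≤ k) (hk' : k ≤ D.m) :
    D.muk k * D.pi ≤ ∑ i ∈ Finset.range k, D.s i * D.w i := by
  set A := ∑ i ∈ Finset.range k, D.s i * D.w i with hA
  set B := ∑ i ∈ Finset.Ico k D.m, D.s i * D.w i with hB
  have hpi : D.pi = A + B := by
    unfold pi
    rw [← Finset.sum_range_add_sum_Ico _ hk']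
  have ha0 : 0 ≤ D.muk k := D.muk_nonneg hk'
  have ha1 : D.muk k ≤ 1 := D.muk_le_one hk'
  have hkm : k - 1 < D.m := by omega
  have hs0 : 0 ≤ D.s (k-1) := D.s_nonneg _ hkm
  have hA2 : D.s (k-1) * D.muk k ≤ A := by
    rw [hA]
    unfold muk
    rw [Finset.mul_sum]
    apply Finset.sum_le_sum
    intro i hi
    have hi' := Finset.mem_range.mp hi
    have him : i < D.m := by omega
    have : D.s (k-1) ≤ D.s i := by
      rcases eq_or_lt_of_le (Nat.le_sub_one_of_lt hi') with h | h
      · rw [h]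
      · exact (D.s_desc i (k-1) h hkm).le
    nlinarith [D.w_pos i him]
  have hBk : B ≤ D.s (k-1) * (1 - D.muk k) := by
    have h1 : (1 : ℝ) - D.muk k = ∑ i ∈ Finset.Ico k D.m, D.w i := by
      have := Finset.sum_range_add_sum_Ico D.w hk'
      rw [D.w_sum] at this
      unfold muk
      linarith
    rw [hB, h1, Finset.mul_sum]
    apply Finset.sum_le_sum
    intro i hi
    obtain ⟨hi1, hi2⟩ := Finset.mem_Ico.mp hi
    have : D.s i ≤ D.s (k-1) := (D.s_desc (k-1) i (by omega) hi2).le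
    nlinarith [D.w_pos i hi2]
  nlinarith [mul_le_mul_of_nonneg_left hBk ha0, mul_le_mul_of_nonneg_right hA2 (by linarith : (0:ℝ) ≤ 1 - D.muk k)]

/-- Universal upper bound on `posSel` for any selection rule. -/
lemma posSel_le (D : CalibScore) {t : ℕ → ℝ} (ht : D.IsSelRule t) {k : ℕ}
    (hk : k + 1 ≤ D.m) :
    D.posSel t ≤ D.s k * D.selRate t + D.ck (k+1) := by
  have key : D.posSel t - D.s k * D.selRate t
      = ∑ i ∈ Finset.range D.m, (D.s i - D.s k) * (D.w i * t i) := by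
    unfold posSel selRate
    rw [Finset.mul_sum, ← Finset.sum_sub_distrib]
    apply Finset.sum_congr rfl
    intro i _
    ring
  have hsplit : ∑ i ∈ Finset.range D.m, (D.s i - D.s k) * (D.w i * t i)
      = (∑ i ∈ Finset.range k, (D.s i - D.s k) * (D.w i * t i))
        + ∑ i ∈ Finset.Ico k D.m, (D.s i - D.s k) * (D.w i * t i) := by
    rw [Finset.sum_range_add_sum_Ico _ (by omega : k ≤ D.m)]
  have h1 : (∑ i ∈ Finset.range k, (D.s i - D.s k) * (D.w i * t i)) ≤ D.ck (k+1) := by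
    unfold ck
    simp only [Nat.add_sub_cancel]
    apply Finset.sum_le_sum
    intro i hi
    have hi' := Finset.mem_range.mp hi
    have him : i < D.m := by omega
    have hs : D.s k < D.s i := D.s_desc i k hi' (by omega)
    obtain ⟨ht0, ht1⟩ := ht i him
    have hw := D.w_pos i him
    have := mul_le_mul_of_nonneg_left (mul_le_of_le_one_right hw.le ht1)
      (by linarith : (0:ℝ) ≤ D.s i - D.s k)
    nlinarith
  have h2 : (∑ i ∈ Finset.Ico k D.m, (D.s i - D.s k) * (D.w i * t i)) ≤ 0 := by
    apply Finset.sum_nonpos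
    intro i hi
    obtain ⟨hi1, hi2⟩ := Finset.mem_Ico.mp hi
    have hs : D.s i ≤ D.s k := by
      rcases eq_or_lt_of_le hi1 with h | h
      · rw [h]
      · exact (D.s_desc k i h hi2).le
    obtain ⟨ht0, ht1⟩ := ht i hi2
    have hw := D.w_pos i hi2
    exact mul_nonpos_of_nonpos_of_nonneg (by linarith) (mul_nonneg hw.le ht0)
  linarith [key, hsplit, h1, h2]

/-- The top-down threshold rule with selection rate `μ ∈ (μ_k, μ_{k+1}]`. -/
noncomputable def topRule (D : CalibScore) (k : ℕ) (μ : ℝ) : ℕ → ℝ :=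
  fun i => if i < k then 1 else if i = k then (μ - D.muk k) / D.w k else 0

lemma topRule_isSelRule (D : CalibScore) {k : ℕ} (hk : k + 1 ≤ D.m) {μ : ℝ}
    (h1 : D.muk k < μ) (h2 : μ ≤ D.muk (k+1)) : D.IsSelRule (D.topRule k μ) := by
  intro i him
  unfold topRule
  split_ifs with h h'
  · exact ⟨zero_le_one, le_refl 1⟩
  · subst h'
    have hw := D.w_pos i (by omega)
    have hmuk : D.muk (i+1) = D.muk i + D.w i := by
      unfold muk; rw [Finset.sum_range_succ]
    constructor
    · exact div_nonneg (by linarith) hw.le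
    · rw [div_le_one hw]; rw [hmuk] at h2; linarith
  · exact ⟨le_refl 0, zero_le_one⟩

lemma topRule_selRate (D : CalibScore) {k : ℕ} (hk : k + 1 ≤ D.m) {μ : ℝ}
    (h1 : D.muk k < μ) : D.selRate (D.topRule k μ) = μ := by
  have hw := D.w_pos k (by omega)
  unfold selRate topRule
  rw [← Finset.sum_range_add_sum_Ico _ (by omega : k + 1 ≤ D.m)]
  have htail : ∑ i ∈ Finset.Ico (k+1) D.m,
      (D.w i * if i < k then 1 else if i = k then (μ - D.muk k) / D.w k else 0) = 0 := by
    apply Finset.sum_eq_zero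
    intro i hi
    obtain ⟨hi1, _⟩ := Finset.mem_Ico.mp hi
    rw [if_neg (by omega), if_neg (by omega)]
    ring
  rw [htail, add_zero, Finset.sum_range_succ, if_neg (by omega), if_pos rfl]
  have hhead : ∑ i ∈ Finset.range k,
      (D.w i * if i < k then 1 else if i = k then (μ - D.muk k) / D.w k else 0)
      = D.muk k := by
    unfold muk
    apply Finset.sum_congr rfl
    intro i hi
    rw [if_pos (Finset.mem_range.mp hi), mul_one]
  rw [hhead, mul_div_cancel₀ _ (ne_of_gt hw)]
  ring

lemma topRule_posSel (D : CalibScore) {k : ℕ} (hk : k + 1 ≤ D.m) {μ : ℝ}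
    (h1 : D.muk k < μ) : D.posSel (D.topRule k μ) = D.s k * μ + D.ck (k+1) := by
  have hw := D.w_pos k (by omega)
  unfold posSel topRule
  rw [← Finset.sum_range_add_sum_Ico _ (by omega : k + 1 ≤ D.m)]
  have htail : ∑ i ∈ Finset.Ico (k+1) D.m,
      (D.s i * D.w i * if i < k then 1 else if i = k then (μ - D.muk k) / D.w k else 0) = 0 := by
    apply Finset.sum_eq_zero
    intro i hi
    obtain ⟨hi1, _⟩ := Finset.mem_Ico.mp hi
    rw [if_neg (by omega), if_neg (by omega)]
    ring
  rw [htail, add_zero, Finset.sum_range_succ, if_neg (by omega), if_pos rfl]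
  have hhead : ∑ i ∈ Finset.range k,
      (D.s i * D.w i * if i < k then 1 else if i = k then (μ - D.muk k) / D.w k else 0)
      = ∑ i ∈ Finset.range k, D.s i * D.w i := by
    apply Finset.sum_congr rfl
    intro i hi
    rw [if_pos (Finset.mem_range.mp hi), mul_one]
  rw [hhead]
  have hsum : ∑ i ∈ Finset.range (k+1), D.s i * D.w i
      = (∑ i ∈ Finset.range k, D.s i * D.w i) + D.s k * D.w k := Finset.sum_range_succ _ _
  have hkey := D.key k
  have hmuk : D.muk (k+1) = D.muk k + D.w k := by
    unfold muk; rw [Finset.sum_range_succ]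
  rw [hmuk, mul_add] at hkey
  have hq : D.s k * D.w k * ((μ - D.muk k)/D.w k) = D.s k * (μ - D.muk k) := by
    field_simp
  rw [hq]
  have htot : (∑ i ∈ Finset.range k, D.s i * D.w i) = D.s k * D.muk k + D.ck (k+1) := by
    linarith
  rw [htot]; ring

lemma sum_eq (D : CalibScore) (k : ℕ) :
    ∑ i ∈ Finset.range k, D.s i * D.w i = D.s k * D.muk k + D.ck (k+1) := by
  have hkey := D.key k
  have hsum : ∑ i ∈ Finset.range (k+1), D.s i * D.w i
      = (∑ i ∈ Finset.range k, D.s i * D.w i) + D.s k * D.w k := Finset.sum_range_succ _ _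
  have hmuk : D.muk (k+1) = D.muk k + D.w k := by
    unfold muk; rw [Finset.sum_range_succ]
  rw [hmuk, mul_add] at hkey
  linarith

lemma interp (D : CalibScore) {k : ℕ} (hk : k + 1 ≤ D.m) {μ : ℝ}
    (hμ1 : D.muk k ≤ μ) (hμ2 : μ ≤ D.muk (k+1)) :
    μ * D.pi ≤ D.s k * μ + D.ck (k+1) := by
  have ga : D.muk k * D.pi ≤ D.s k * D.muk k + D.ck (k+1) := by
    rcases Nat.eq_zero_or_pos k with h | h
    · subst h
      simp [D.muk_zero]
      exact D.ck_nonneg (by omega)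
    · rw [← D.sum_eq k]
      exact D.g_nonneg h (by omega)
  have gb : D.muk (k+1) * D.pi ≤ D.s k * D.muk (k+1) + D.ck (k+1) := by
    rw [D.key k]
    exact D.g_nonneg (by omega) hk
  rcases le_total D.pi (D.s k) with h | h
  · nlinarith [mul_nonneg (sub_nonneg.mpr h) (sub_nonneg.mpr hμ1)]
  · nlinarith [mul_nonneg (sub_nonneg.mpr h) (sub_nonneg.mpr hμ2)]

lemma mem_imp_le (D : CalibScore) {k : ℕ} (hk : k + 1 ≤ D.m) {μ p : ℝ} (h0 : 0 < μ)
    (hp : p ∈ {p | ∃ q, D.FeasibleWith μ p q ∧ q ≤ D.pi ∧ D.pi ≤ p}) :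
    p ≤ D.s k + D.ck (k+1) / μ := by
  obtain ⟨q, ⟨_, _, t, ht, hrate, hppv, _⟩, _, _⟩ := hp
  have hps := D.posSel_le ht hk
  rw [hrate] at hps
  have : p = D.posSel t / μ := by rw [← hppv]; unfold ppv; rw [hrate]
  rw [this, show D.s k + D.ck (k+1) / μ = (D.s k * μ + D.ck (k+1)) / μ from by field_simp]
  exact (div_le_div_iff_of_pos_right h0).mpr hps

lemma pi_mem (D : CalibScore) {μ : ℝ} (h0 : 0 < μ) (h1 : μ < 1) :
    D.pi ∈ {p | ∃ q, D.FeasibleWith μ p q ∧ q ≤ D.pi ∧ D.pi ≤ p} := by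
  refine ⟨D.pi, ⟨h0, h1, fun _ => μ, ?_, ?_, ?_, ?_⟩, le_refl _, le_refl _⟩
  · intro i _; exact ⟨h0.le, h1.le⟩
  · unfold selRate; rw [← Finset.sum_mul, D.w_sum, one_mul]
  · unfold ppv posSel selRate
    rw [← Finset.sum_mul, ← Finset.sum_mul, D.w_sum, one_mul,
      mul_div_assoc, div_self (ne_of_gt h0), mul_one]
    rfl
  · unfold forr posSel selRate
    rw [← Finset.sum_mul, ← Finset.sum_mul, D.w_sum, one_mul]
    rw [show (∑ i ∈ Finset.range D.m, D.s i * D.w i) = D.pi from rfl]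
    rw [div_eq_iff (show (1:ℝ) - μ ≠ 0 by intro h; linarith)]
    ring

lemma pStar_le (D : CalibScore) {k : ℕ} (hk : k + 1 ≤ D.m) {μ : ℝ}
    (h0 : 0 < μ) (h1 : μ < 1) : D.pStar μ ≤ D.s k + D.ck (k+1) / μ := by
  apply csSup_le ⟨D.pi, D.pi_mem h0 h1⟩
  intro p hp
  exact D.mem_imp_le hk h0 hp

lemma pStar_eq (D : CalibScore) {k : ℕ} (hk : k + 1 ≤ D.m) {μ : ℝ}
    (hμ1 : D.muk k < μ) (hμ2 : μ ≤ D.muk (k+1)) (h0 : 0 < μ) (h1 : μ < 1) :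
    D.pStar μ = D.s k + D.ck (k+1) / μ := by
  have hint : μ * D.pi ≤ D.s k * μ + D.ck (k+1) := D.interp hk hμ1.le hμ2
  have hmem : (D.s k + D.ck (k+1) / μ) ∈
      {p | ∃ q, D.FeasibleWith μ p q ∧ q ≤ D.pi ∧ D.pi ≤ p} := by
    refine ⟨D.forr (D.topRule k μ),
      ⟨h0, h1, D.topRule k μ, D.topRule_isSelRule hk hμ1 hμ2,
        D.topRule_selRate hk hμ1, ?_, rfl⟩, ?_, ?_⟩
    · unfold ppv
      rw [D.topRule_selRate hk hμ1, D.topRule_posSel hk hμ1]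
      field_simp
    · unfold forr
      rw [D.topRule_selRate hk hμ1, D.topRule_posSel hk hμ1]
      rw [div_le_iff₀ (by linarith)]
      nlinarith
    · rw [show D.s k + D.ck (k+1) / μ = (D.s k * μ + D.ck (k+1)) / μ from by field_simp,
        le_div_iff₀ h0]
      linarith
  apply le_antisymm (D.pStar_le hk h0 h1)
  exact le_csSup ⟨D.s k + D.ck (k+1) / μ, fun p hp => D.mem_imp_le hk h0 hp⟩ hmem

lemma exists_interval (D : CalibScore) {μ : ℝ} (h0 : 0 < μ) (h1 : μ < 1) :
    ∃ k, k + 1 ≤ D.m ∧ D.muk k < μ ∧ μ ≤ D.muk (k+1) := by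
  haveI := Classical.decPred fun j => μ ≤ D.muk j
  have hex : ∃ j, μ ≤ D.muk j := ⟨D.m, by rw [D.muk_m]; exact h1.le⟩
  set j0 := Nat.find hex with hj0
  have hspec : μ ≤ D.muk j0 := Nat.find_spec hex
  have hj0m : j0 ≤ D.m := Nat.find_le (by rw [D.muk_m]; exact h1.le)
  have hj0pos : 1 ≤ j0 := by
    by_contra h
    push_neg at h
    interval_cases j0
    · rw [D.muk_zero] at hspec; linarith
  obtain ⟨k, hk⟩ : ∃ k, j0 = k + 1 := ⟨j0 - 1, by omega⟩
  refine ⟨k, by omega, ?_, by rw [← hk]; exact hspec⟩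
  have := Nat.find_min hex (m := k) (by omega)
  push_neg at this
  exact this

lemma ck_one (D : CalibScore) : D.ck 1 = 0 := by simp [ck]

lemma ck_diff (D : CalibScore) (j : ℕ) :
    D.ck (j+2) = D.ck (j+1) + D.muk (j+1) * (D.s j - D.s (j+1)) := by
  have h2 : j + 2 - 1 = j + 1 := by omega
  have h1 : j + 1 - 1 = j := by omega
  unfold ck muk
  rw [h2, h1]
  have hterm : ∀ i ∈ Finset.range (j+1), D.w i * (D.s i - D.s (j+1))
      = D.w i * (D.s i - D.s j) + D.w i * (D.s j - D.s (j+1)) := fun i _ => by ring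
  rw [Finset.sum_congr rfl hterm, Finset.sum_add_distrib,
    Finset.sum_range_succ (fun i => D.w i * (D.s i - D.s j)), sub_self, mul_zero, add_zero,
    ← Finset.sum_mul]

lemma pkF_succ (D : CalibScore) (k : ℕ) :
    D.pkF (k+1) = D.s k + D.ck (k+1) / D.muk (k+1) := by simp [pkF]

lemma pkF_one (D : CalibScore) : D.pkF 1 = D.s 0 := by
  have := D.pkF_succ 0
  rw [D.ck_one] at this
  simpa using this

lemma pkF_zero (D : CalibScore) : D.pkF 0 = D.s 0 := by
  simp [pkF, ck, muk]

lemma pkF_m (D : CalibScore) : D.pkF D.m = D.pi := by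
  have hm := D.one_lt_m
  unfold pkF
  rw [D.muk_m, div_one, D.pi_eq]
  ring

/-- Continuity of the piecewise boundary at breakpoints. -/
lemma cont (D : CalibScore) {j : ℕ} (hj : j + 1 ≤ D.m) :
    D.s (j+1) + D.ck (j+2) / D.muk (j+1) = D.pkF (j+1) := by
  have ha : 0 < D.muk (j+1) := D.muk_pos (by omega) hj
  rw [D.ck_diff, D.pkF_succ]
  field_simp
  ring

lemma pkF_succ_lt (D : CalibScore) {j : ℕ} (hj : j + 2 ≤ D.m) :
    D.pkF (j+2) < D.pkF (j+1) := by
  have ha : 0 < D.muk (j+1) := D.muk_pos (by omega) (by omega)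
  have hb : D.muk (j+1) < D.muk (j+2) := D.muk_lt (by omega) hj
  have hc : 0 < D.ck (j+2) := D.ck_pos (by omega) hj
  have e1 := D.pkF_succ (j+1)
  rw [show j+1+1 = j+2 from rfl] at e1
  rw [e1, ← D.cont (show j + 1 ≤ D.m by omega)]
  have : D.ck (j+2) / D.muk (j+2) < D.ck (j+2) / D.muk (j+1) :=
    div_lt_div_of_pos_left hc ha hb
  linarith

lemma pkF_lt (D : CalibScore) {k l : ℕ} (hk : 1 ≤ k) (hkl : k < l) (hl : l ≤ D.m) :
    D.pkF l < D.pkF k := by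
  induction l with
  | zero => omega
  | succ n ih =>
    rcases Nat.lt_or_ge k n with h | h
    · have hn : 1 ≤ n := by omega
      have := ih (by omega) (by omega)
      obtain ⟨j, rfl⟩ : ∃ j, n = j + 1 := ⟨n - 1, by omega⟩
      have := D.pkF_succ_lt (j := j) (by omega)
      linarith
    · have : k = n := by omega
      subst this
      obtain ⟨j, rfl⟩ : ∃ j, k = j + 1 := ⟨k - 1, by omega⟩
      exact D.pkF_succ_lt (by omega)

lemma pkF_le (D : CalibScore) {k l : ℕ} (hk : 1 ≤ k) (hkl : k ≤ l) (hl : l ≤ D.m) :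
    D.pkF l ≤ D.pkF k := by
  rcases eq_or_lt_of_le hkl with h | h
  · rw [h]
  · exact (D.pkF_lt hk h hl).le

lemma Ik_eq (D : CalibScore) {j : ℕ} (hj : j + 2 ≤ D.m) (hj' : j + 2 < D.m) :
    D.Ik (j+2) = Set.Ioc (D.muk (j+1)) (D.muk (j+2)) := by
  have ha : 0 < D.muk (j+1) := D.muk_pos (by omega) (by omega)
  have hb : D.muk (j+2) < 1 := D.muk_lt_one hj'
  unfold Ik
  rw [show j+2-1 = j+1 from rfl]
  ext x
  simp only [Set.mem_inter_iff, Set.mem_Ioc, Set.mem_Ioo]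
  constructor
  · rintro ⟨h1, _⟩; exact h1
  · rintro ⟨h1, h2⟩; exact ⟨⟨h1, h2⟩, lt_trans ha h1, lt_of_le_of_lt h2 hb⟩

lemma image_Ik_lt (D : CalibScore) {j : ℕ} (hj : j + 2 < D.m) :
    D.pStar '' D.Ik (j+2) = Set.Ico (D.pkF (j+2)) (D.pkF (j+1)) := by
  have ha : 0 < D.muk (j+1) := D.muk_pos (by omega) (by omega)
  have hab : D.muk (j+1) < D.muk (j+2) := D.muk_lt (by omega) (by omega)
  have hb : D.muk (j+2) < 1 := D.muk_lt_one hj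
  have hc : 0 < D.ck (j+2) := D.ck_pos (by omega) (by omega)
  have e1 := D.pkF_succ (j+1)
  rw [show j+1+1 = j+2 from rfl] at e1
  have hcont := D.cont (show j + 1 ≤ D.m by omega)
  rw [D.Ik_eq (by omega) hj]
  ext p
  constructor
  · rintro ⟨μ, ⟨h1, h2⟩, rfl⟩
    have h0 : 0 < μ := lt_trans ha h1
    have h1' : μ < 1 := lt_of_le_of_lt h2 hb
    rw [D.pStar_eq (by omega) h1 h2 h0 h1']
    constructor
    · rw [e1]
      have : D.ck (j+2) / D.muk (j+2) ≤ D.ck (j+2) / μ :=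
        div_le_div_of_nonneg_left hc.le h0 h2
      linarith
    · rw [← hcont]
      have : D.ck (j+2) / μ < D.ck (j+2) / D.muk (j+1) :=
        div_lt_div_of_pos_left hc ha h1
      linarith
  · rintro ⟨hp1, hp2⟩
    rw [e1] at hp1
    rw [← hcont] at hp2
    have hsp : D.s (j+1) < p := by
      have : 0 < D.ck (j+2) / D.muk (j+2) := div_pos hc (lt_trans ha hab)
      linarith
    have hps : 0 < p - D.s (j+1) := by linarith
    set μ := D.ck (j+2) / (p - D.s (j+1)) with hμdef
    have hμ0 : 0 < μ := div_pos hc hps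
    have hμb : μ ≤ D.muk (j+2) := by
      rw [hμdef, div_le_iff₀ hps]
      have h' : D.ck (j+2) / D.muk (j+2) ≤ p - D.s (j+1) := by linarith
      have := (div_le_iff₀ (lt_trans ha hab)).mp h'
      linarith
    have hμa : D.muk (j+1) < μ := by
      rw [hμdef, lt_div_iff₀ hps]
      have h' : p - D.s (j+1) < D.ck (j+2) / D.muk (j+1) := by linarith
      have := (lt_div_iff₀ ha).mp h'
      linarith
    have hμ1 : μ < 1 := lt_of_le_of_lt hμb hb
    refine ⟨μ, ⟨hμa, hμb⟩, ?_⟩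
    rw [D.pStar_eq (by omega) hμa hμb hμ0 hμ1, hμdef]
    field_simp
    ring

lemma image_Ik_m (D : CalibScore) :
    D.pStar '' D.Ik D.m = Set.Ioo (D.pkF D.m) (D.pkF (D.m - 1)) := by
  have hm := D.one_lt_m
  obtain ⟨j, hjm⟩ : ∃ j, D.m = j + 2 := ⟨D.m - 2, by omega⟩
  have ha : 0 < D.muk (j+1) := D.muk_pos (by omega) (by omega)
  have hab : D.muk (j+1) < D.muk (j+2) := D.muk_lt (by omega) (by omega)
  have hbone : D.muk (j+2) = 1 := by rw [← hjm]; exact D.muk_m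
  have hc : 0 < D.ck (j+2) := D.ck_pos (by omega) (by omega)
  have e1 := D.pkF_succ (j+1)
  rw [show j+1+1 = j+2 from rfl, hbone, div_one] at e1
  have hcont := D.cont (show j + 1 ≤ D.m by omega)
  have hIk : D.Ik (j+2) = Set.Ioo (D.muk (j+1)) 1 := by
    unfold Ik
    rw [show j+2-1 = j+1 from rfl, hbone]
    ext x
    simp only [Set.mem_inter_iff, Set.mem_Ioc, Set.mem_Ioo]
    constructor
    · rintro ⟨⟨h1, _⟩, _, h2⟩; exact ⟨h1, h2⟩
    · rintro ⟨h1, h2⟩; exact ⟨⟨h1, h2.le⟩, lt_trans ha h1, h2⟩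
  rw [hjm, show j+2-1 = j+1 from rfl, hIk]
  ext p
  constructor
  · rintro ⟨μ, ⟨h1, h2⟩, rfl⟩
    have h0 : 0 < μ := lt_trans ha h1
    have h2' : μ ≤ D.muk (j+2) := by rw [hbone]; exact h2.le
    rw [D.pStar_eq (by omega) h1 h2' h0 h2]
    constructor
    · rw [e1]
      have : D.ck (j+2) / 1 < D.ck (j+2) / μ := div_lt_div_of_pos_left hc h0 h2
      rw [div_one] at this
      linarith
    · rw [← hcont]
      have : D.ck (j+2) / μ < D.ck (j+2) / D.muk (j+1) :=
        div_lt_div_of_pos_left hc ha h1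
      linarith
  · rintro ⟨hp1, hp2⟩
    rw [e1] at hp1
    rw [← hcont] at hp2
    have hsp : D.s (j+1) < p := by linarith
    have hps : 0 < p - D.s (j+1) := by linarith
    set μ := D.ck (j+2) / (p - D.s (j+1)) with hμdef
    have hμ0 : 0 < μ := div_pos hc hps
    have hμ1 : μ < 1 := by
      rw [hμdef, div_lt_one hps]
      linarith
    have hμa : D.muk (j+1) < μ := by
      rw [hμdef, lt_div_iff₀ hps]
      have h' : p - D.s (j+1) < D.ck (j+2) / D.muk (j+1) := by linarith
      have := (lt_div_iff₀ ha).mp h'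
      linarith
    have hμb : μ ≤ D.muk (j+2) := by rw [hbone]; exact hμ1.le
    refine ⟨μ, ⟨hμa, hμ1⟩, ?_⟩
    rw [D.pStar_eq (by omega) hμa hμb hμ0 hμ1, hμdef]
    field_simp
    ring

end CalibScore

/-- `p*(μ)` is constant equal to `s_1` on `I_1 = (0, μ_1]` and
strictly decreasing on `(μ_1, 1)`; consequently, for `1 < k ≤ m`, the image
`J_k = p*(I_k)` satisfies `J_k = [p_k, p_{k−1})` for `k < m` and
`J_m = (p_m, p_{m−1})`, where `p_k = s_k + c_k/μ_k` is the value `p*(μ_k)`, the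
`J_k` are pairwise disjoint with union `(π, s_1)`, and `p_m = π`, `p_1 = s_1`. -/
theorem stmt8 (D : CalibScore) :
    (∀ μ ∈ Set.Ioc (0 : ℝ) (D.muk 1), D.pStar μ = D.s 0) ∧
    StrictAntiOn D.pStar (Set.Ioo (D.muk 1) 1) ∧
    (∀ k, 1 < k → k < D.m →
      D.pStar '' D.Ik k = Set.Ico (D.pkF k) (D.pkF (k - 1))) ∧
    D.pStar '' D.Ik D.m = Set.Ioo (D.pkF D.m) (D.pkF (D.m - 1)) ∧
    (∀ k, 1 < k → k < D.m → D.pStar (D.muk k) = D.pkF k) ∧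
    (⋃ k ∈ Set.Icc 2 D.m, D.pStar '' D.Ik k) = Set.Ioo D.pi (D.s 0) ∧
    (∀ k l, 1 < k → k < l → l ≤ D.m → Disjoint (D.pStar '' D.Ik k) (D.pStar '' D.Ik l)) ∧
    D.pkF D.m = D.pi ∧ D.pkF 1 = D.s 0 := by
  have hm := D.one_lt_m
  refine ⟨?_, ?_, ?_, D.image_Ik_m, ?_, ?_, ?_, D.pkF_m, D.pkF_one⟩
  · -- constant on I_1
    rintro μ ⟨h0, h2⟩
    have h1 : μ < 1 := lt_of_le_of_lt h2 (D.muk_lt_one hm)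
    have := D.pStar_eq (k := 0) (by omega) (by rw [D.muk_zero]; exact h0) h2 h0 h1
    rw [this, D.ck_one]
    simp
  · -- strictly decreasing on (μ₁, 1)
    intro a ha b hb hab
    have ha0 : 0 < a := lt_trans (D.muk_pos le_rfl hm.le) ha.1
    obtain ⟨ka, hka, ha1, ha2⟩ := D.exists_interval ha0 ha.2
    have hka1 : 1 ≤ ka := by
      by_contra h
      push_neg at h
      have : ka = 0 := by omega
      rw [this] at ha2
      exact absurd ha2 (not_le.mpr ha.1)
    have hc : 0 < D.ck (ka+1) := D.ck_pos (by omega) hka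
    have hb0 : 0 < b := lt_trans ha0 hab
    calc D.pStar b ≤ D.s ka + D.ck (ka+1) / b := D.pStar_le hka hb0 hb.2
    _ < D.s ka + D.ck (ka+1) / a := by
        have := div_lt_div_of_pos_left hc ha0 hab
        linarith
    _ = D.pStar a := (D.pStar_eq hka ha1 ha2 ha0 ha.2).symm
  · -- image of I_k for 1 < k < m
    intro k hk1 hkm
    obtain ⟨j, rfl⟩ : ∃ j, k = j + 2 := ⟨k - 2, by omega⟩
    rw [show j+2-1 = j+1 from rfl]
    exact D.image_Ik_lt hkm
  · -- value at breakpoints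
    intro k hk1 hkm
    obtain ⟨j, rfl⟩ : ∃ j, k = j + 2 := ⟨k - 2, by omega⟩
    have hab : D.muk (j+1) < D.muk (j+2) := D.muk_lt (by omega) (by omega)
    have h0 : 0 < D.muk (j+2) := D.muk_pos (by omega) (by omega)
    have h1 : D.muk (j+2) < 1 := D.muk_lt_one hkm
    rw [D.pStar_eq (k := j+1) (by omega) hab le_rfl h0 h1]
    have e1 := D.pkF_succ (j+1)
    rw [show j+1+1 = j+2 from rfl] at e1
    exact e1.symm
  · -- union
    apply Set.eq_of_subset_of_subset
    · intro p hp
      simp only [Set.mem_iUnion, exists_prop] at hp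
      obtain ⟨k, ⟨hk2, hkm⟩, hpk⟩ := hp
      rcases eq_or_lt_of_le hkm with hEq | hlt
      · subst hEq
        rw [D.image_Ik_m] at hpk
        refine ⟨by rw [← D.pkF_m]; exact hpk.1, ?_⟩
        calc p < D.pkF (D.m - 1) := hpk.2
        _ ≤ D.pkF 1 := D.pkF_le le_rfl (by omega) (by omega)
        _ = D.s 0 := D.pkF_one
      · obtain ⟨j, rfl⟩ : ∃ j, k = j + 2 := ⟨k - 2, by omega⟩
        rw [D.image_Ik_lt hlt] at hpk
        constructor
        · calc D.pi = D.pkF D.m := D.pkF_m.symm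
          _ < D.pkF (j+2) := D.pkF_lt (by omega) hlt le_rfl
          _ ≤ p := hpk.1
        · calc p < D.pkF (j+1) := hpk.2
          _ ≤ D.pkF 1 := D.pkF_le le_rfl (by omega) (by omega)
          _ = D.s 0 := D.pkF_one
    · intro p hp
      obtain ⟨hppi, hps⟩ := hp
      haveI := Classical.decPred fun k => D.pkF k ≤ p
      have hex : ∃ k, D.pkF k ≤ p := ⟨D.m, by rw [D.pkF_m]; exact hppi.le⟩
      set j0 := Nat.find hex with hj0def
      have hspec : D.pkF j0 ≤ p := Nat.find_spec hex
      have hj0m : j0 ≤ D.m := Nat.find_le (by rw [D.pkF_m]; exact hppi.le)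
      have h2 : 2 ≤ j0 := by
        by_contra h
        push_neg at h
        have hgt : p < D.pkF j0 := by
          rcases (by omega : j0 = 0 ∨ j0 = 1) with h0 | h0 <;> rw [h0]
          · rw [D.pkF_zero]; exact hps
          · rw [D.pkF_one]; exact hps
        linarith
      have hmin : p < D.pkF (j0 - 1) := by
        have := Nat.find_min hex (m := j0 - 1) (by omega)
        push_neg at this
        exact this
      simp only [Set.mem_iUnion, exists_prop]
      rcases eq_or_lt_of_le hj0m with hEq | hlt
      · refine ⟨D.m, ⟨by omega, le_rfl⟩, ?_⟩
        rw [D.image_Ik_m]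
        exact ⟨by rw [D.pkF_m]; exact hppi, by rw [← hEq]; exact hmin⟩
      · refine ⟨j0, ⟨h2, hj0m⟩, ?_⟩
        obtain ⟨j, hj⟩ : ∃ j, j0 = j + 2 := ⟨j0 - 2, by omega⟩
        rw [hj, D.image_Ik_lt (by omega)]
        refine ⟨by rw [← hj]; exact hspec, ?_⟩
        have hj1 : j0 - 1 = j + 1 := by omega
        rw [hj1] at hmin
        exact hmin
  · -- disjointness
    intro k l hk1 hkl hlm
    obtain ⟨j, rfl⟩ : ∃ j, k = j + 2 := ⟨k - 2, by omega⟩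
    rw [Set.disjoint_left]
    intro x hxk hxl
    rw [D.image_Ik_lt (by omega : j + 2 < D.m)] at hxk
    have hxlt : x < D.pkF (l - 1) := by
      rcases eq_or_lt_of_le hlm with hEq | hlt
      · subst hEq
        rw [D.image_Ik_m] at hxl
        exact hxl.2
      · obtain ⟨i, rfl⟩ : ∃ i, l = i + 2 := ⟨l - 2, by omega⟩
        rw [D.image_Ik_lt hlt] at hxl
        rw [show i+2-1 = i+1 from rfl]
        exact hxl.2
    have hle : D.pkF (l - 1) ≤ D.pkF (j+2) := D.pkF_le (by omega) (by omega) (by omega)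
    have := hxk.1
    linarith
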